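/- Let H be a real Hilbert space, φ : ℕ → H a feature map with ‖φ i‖ ≤ C for all i and some constant C > 0, and define the kernel k(i,j) = ⟪φ i, φ j⟫. Let p : ℕ → ℝ be nonnegative with ∑_{i=0}^∞ p(i) = 1, let g ∈ H, and define f : ℕ → ℝ by f(i) = ⟪g, φ i⟫. Fix N ∈ ℕ and suppose the Gram matrix K ∈ ℝ^{N×N} with entries K_{ij} = k(i,j) for 0 ≤ i,j < N is invertible. Define the kernel-mean vector μ_N ∈ ℝ^N by (μ_N)_j = ∑_{i=0}^∞ p(i) k(i,j) (each series converges absolutely), and the BayesSum estimate Î = μ_N^⊤ K^{−1} f_N where f_N = (f(0),…,f(N−1))^⊤. Then |∑_{i=0}^∞ p(i) f(i) − Î| ≤ C ‖g‖ (1 − ∑_{i=0}^{N−1} p(i)). -/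
import Mathlib


open Matrix
open scoped RealInnerProductSpace

/-- BayesSum error bound (Theorem 1): for `f` in the RKHS of `k(i,j) = ⟪φ i, φ j⟫`,
the BayesSum estimate `Î = μ_N^⊤ K⁻¹ f_N` satisfies
`|∑ p(i) f(i) − Î| ≤ C ‖g‖ (1 − ∑_{i<N} p(i))`. -/
theorem stmt0 {H : Type*} [NormedAddCommGroup H] [InnerProductSpace ℝ H] [CompleteSpace H]
    (φ : ℕ → H) (C : ℝ) (hC : 0 < C) (hφ : ∀ i, ‖φ i‖ ≤ C)
    (p : ℕ → ℝ) (hp : ∀ i, 0 ≤ p i) (hp1 : HasSum p 1)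
    (g : H) (f : ℕ → ℝ) (hf : ∀ i, f i = ⟪g, φ i⟫)
    (N : ℕ) (K : Matrix (Fin N) (Fin N) ℝ)
    (hK : ∀ i j : Fin N, K i j = ⟪φ (i : ℕ), φ (j : ℕ)⟫)
    (hKinv : IsUnit K.det)
    (μ : Fin N → ℝ) (hμ : ∀ j : Fin N, μ j = ∑' i : ℕ, p i * ⟪φ i, φ (j : ℕ)⟫)
    (Ihat : ℝ) (hI : Ihat = μ ⬝ᵥ (K⁻¹ *ᵥ fun j : Fin N => f (j : ℕ))) :
    |(∑' i : ℕ, p i * f i) - Ihat| ≤ C * ‖g‖ * (1 - ∑ i ∈ Finset.range N, p i) := by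
  classical
  set w : Fin N → ℝ := Matrix.vecMul μ K⁻¹ with hw
  -- summability of the embedded series
  have hsum : Summable (fun i => p i • φ i) := by
    apply Summable.of_norm
    refine Summable.of_nonneg_of_le (fun i => norm_nonneg _) (fun i => ?_)
      (hp1.summable.mul_right C)
    rw [norm_smul, Real.norm_eq_abs, abs_of_nonneg (hp i)]
    exact mul_le_mul_of_nonneg_left (hφ i) (hp i)
  set μH : H := ∑' i, p i • φ i with hμH
  set hN : H := ∑ k : Fin N, w k • φ k with hhN
  have hwK : Matrix.vecMul w K = μ := by
    rw [hw, Matrix.vecMul_vecMul, Matrix.nonsing_inv_mul K hKinv, Matrix.vecMul_one]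
  -- inner products with φ j
  have hinner_μH : ∀ j : Fin N, ⟪φ (j : ℕ), μH⟫ = μ j := by
    intro j
    have := (innerSL ℝ (φ (j : ℕ))).map_tsum hsum
    simp only [innerSL_apply_apply] at this
    rw [hμH, this, hμ j]
    congr 1
    ext i
    rw [real_inner_smul_right, real_inner_comm]
  have hinner_hN : ∀ j : Fin N, ⟪φ (j : ℕ), hN⟫ = μ j := by
    intro j
    rw [hhN, inner_sum]
    have : ∀ k : Fin N, ⟪φ (j : ℕ), w k • φ (k : ℕ)⟫ = w k * K k j := by
      intro k
      rw [real_inner_smul_right, hK k j, real_inner_comm]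
    rw [Finset.sum_congr rfl (fun k _ => this k)]
    rw [← hwK]
    simp [Matrix.vecMul, dotProduct]
  have hres : ∀ j : Fin N, ⟪φ (j : ℕ), μH - hN⟫ = 0 := by
    intro j
    rw [inner_sub_right, hinner_μH j, hinner_hN j, sub_self]
  -- residual orthogonal to any element of span
  have hspan : ∀ c : Fin N → ℝ, ⟪μH - hN, ∑ k : Fin N, c k • φ (k : ℕ)⟫ = 0 := by
    intro c
    rw [inner_sum]
    refine Finset.sum_eq_zero fun k _ => ?_
    rw [real_inner_smul_right, real_inner_comm, hres k, mul_zero]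
  -- error representation
  have hfg : (∑' i : ℕ, p i * f i) = ⟪g, μH⟫ := by
    have := (innerSL ℝ g).map_tsum hsum
    simp only [innerSL_apply_apply] at this
    rw [hμH, this]
    congr 1
    ext i
    rw [real_inner_smul_right, hf i]
  have hIg : Ihat = ⟪g, hN⟫ := by
    rw [hI, Matrix.dotProduct_mulVec, ← hw, hhN, inner_sum]
    simp only [dotProduct]
    congr 1
    ext k
    rw [real_inner_smul_right, hf k]
  have herr : (∑' i : ℕ, p i * f i) - Ihat = ⟪g, μH - hN⟫ := by
    rw [inner_sub_right, hfg, hIg]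
  -- head and tail
  set μhead : H := ∑ k : Fin N, p (k : ℕ) • φ (k : ℕ) with hμhead
  have htail_sum : Summable (fun i => p (i + N) • φ (i + N)) :=
    (summable_nat_add_iff N).mpr hsum
  have hsplit : μH - μhead = ∑' i, p (i + N) • φ (i + N) := by
    have := Summable.sum_add_tsum_nat_add N hsum
    rw [hμH, hμhead, Fin.sum_univ_eq_sum_range (fun k => p k • φ k)]
    rw [← this]
    abel
  have hptail : (∑' i, p (i + N)) = 1 - ∑ i ∈ Finset.range N, p i := by
    have := Summable.sum_add_tsum_nat_add N hp1.summable
    rw [hp1.tsum_eq] at this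
    linarith
  have hs_nonneg : 0 ≤ 1 - ∑ i ∈ Finset.range N, p i := by
    rw [← hptail]
    exact tsum_nonneg fun i => hp _
  have htail_nsum : Summable (fun i => ‖p (i + N) • φ (i + N)‖) := by
    refine Summable.of_nonneg_of_le (fun i => norm_nonneg _) (fun i => ?_)
      (((summable_nat_add_iff N).mpr hp1.summable).mul_right C)
    rw [norm_smul, Real.norm_eq_abs, abs_of_nonneg (hp _)]
    exact mul_le_mul_of_nonneg_left (hφ _) (hp _)
  have htail_norm : ‖μH - μhead‖ ≤ C * (1 - ∑ i ∈ Finset.range N, p i) := by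
    rw [hsplit]
    calc ‖∑' i, p (i + N) • φ (i + N)‖ ≤ ∑' i, ‖p (i + N) • φ (i + N)‖ :=
          norm_tsum_le_tsum_norm htail_nsum
      _ ≤ ∑' i, p (i + N) * C := by
          refine Summable.tsum_le_tsum (fun i => ?_) htail_nsum
            (((summable_nat_add_iff N).mpr hp1.summable).mul_right C)
          rw [norm_smul, Real.norm_eq_abs, abs_of_nonneg (hp _)]
          exact mul_le_mul_of_nonneg_left (hφ _) (hp _)
      _ = (∑' i, p (i + N)) * C := tsum_mul_right
      _ = C * (1 - ∑ i ∈ Finset.range N, p i) := by rw [hptail]; ring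
  -- Pythagoras: ‖μH - hN‖ ≤ ‖μH - μhead‖
  have hpyth : ‖μH - hN‖ ≤ ‖μH - μhead‖ := by
    have hdiff : hN - μhead = ∑ k : Fin N, (w k - p (k : ℕ)) • φ (k : ℕ) := by
      rw [hhN, hμhead, ← Finset.sum_sub_distrib]
      congr 1; ext k; rw [sub_smul]
    have horth : ⟪μH - hN, hN - μhead⟫ = 0 := by
      rw [hdiff]; exact hspan _
    have hsq : ‖μH - μhead‖ ^ 2 = ‖μH - hN‖ ^ 2 + ‖hN - μhead‖ ^ 2 := by
      have : μH - μhead = (μH - hN) + (hN - μhead) := by abel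
      rw [this, norm_add_sq_real, horth]
      ring
    have h2 : ‖μH - hN‖ ^ 2 ≤ ‖μH - μhead‖ ^ 2 := by
      rw [hsq]; nlinarith [sq_nonneg ‖hN - μhead‖]
    exact (pow_le_pow_iff_left₀ (norm_nonneg _) (norm_nonneg _) two_ne_zero).mp h2
  -- conclude
  calc |(∑' i : ℕ, p i * f i) - Ihat| = |⟪g, μH - hN⟫| := by rw [herr]
    _ ≤ ‖g‖ * ‖μH - hN‖ := abs_real_inner_le_norm g _
    _ ≤ ‖g‖ * (C * (1 - ∑ i ∈ Finset.range N, p i)) :=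
        mul_le_mul_of_nonneg_left (le_trans hpyth htail_norm) (norm_nonneg g)
    _ = C * ‖g‖ * (1 - ∑ i ∈ Finset.range N, p i) := by ring
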